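/- Fix an integer n ≥ 1. In ℝ^{n+1} with the standard inner product, let V = {x ∈ ℝ^{n+1} : x₁+⋯+x_{n+1} = 0}, let Δ₊ = {e_i − e_j : 1 ≤ i < j ≤ n+1} be the positive roots of A_n, and for 1 ≤ j ≤ n let ω_j = e₁+⋯+e_j − (j/(n+1))(e₁+⋯+e_{n+1}) be the fundamental weights. Then a nonzero vector v ∈ V is orthogonal to some set of n−1 linearly independent elements of Δ₊ if and only if v is a nonzero scalar multiple of σ·ω_j for some permutation σ ∈ S_{n+1} (acting by permuting coordinates) and some 1 ≤ j ≤ n. (The normals to the facets of the maximal cones of the chamber complex of the Kostant partition function of A_n are exactly the conjugates of the fundamental weights.) -/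

import Mathlib

open Finset

lemma aux_two_values (n : ℕ) (v : Fin (n+1) → ℝ)
    (g : Fin (n-1) → (Fin (n+1) → ℝ))
    (hli : LinearIndependent ℝ g)
    (hroot : ∀ m, ∃ i j : Fin (n+1), i < j ∧ g m = fun l => (if l = i then (1:ℝ) else 0) - (if l = j then 1 else 0))
    (horth : ∀ m, (∑ l, v l * g m l) = 0)
    (p q r : Fin (n+1)) : v p = v q ∨ v p = v r ∨ v q = v r := by
  by_contra hc
  push_neg at hc
  obtain ⟨hpq, hpr, hqr⟩ := hc
  classical
  have hdiff : ∀ m, ∃ i j : Fin (n+1), v i = v j ∧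
      g m = fun l => (if l = i then (1:ℝ) else 0) - (if l = j then 1 else 0) := by
    intro m
    obtain ⟨i, j, hij, hg⟩ := hroot m
    refine ⟨i, j, ?_, hg⟩
    have h0 := horth m
    rw [hg] at h0
    have hsum : ∑ l, v l * ((if l = i then (1:ℝ) else 0) - (if l = j then 1 else 0)) = v i - v j := by
      simp [mul_sub, Finset.sum_sub_distrib, mul_ite, mul_one, mul_zero]
    rw [hsum] at h0
    linarith
  set T : Fin 3 → Finset (Fin (n+1)) :=
    ![univ, univ.filter (fun l => v l = v p), univ.filter (fun l => v l = v q)] with hT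
  let Φ : (Fin (n+1) → ℝ) →ₗ[ℝ] (Fin 3 → ℝ) := LinearMap.pi (fun t => ∑ l ∈ T t, LinearMap.proj l)
  have hΦapp : ∀ x t, Φ x t = ∑ l ∈ T t, x l := by
    intro x t; simp [Φ, LinearMap.pi_apply, LinearMap.sum_apply]
  have hker : ∀ m, g m ∈ LinearMap.ker Φ := by
    intro m
    obtain ⟨i, j, hvij, hg⟩ := hdiff m
    rw [LinearMap.mem_ker]
    funext t
    rw [hΦapp, hg]
    have hmem : i ∈ T t ↔ j ∈ T t := by
      fin_cases t <;> simp [hT, hvij]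
    simp [Finset.sum_sub_distrib, Finset.sum_ite_eq']
    by_cases h : i ∈ T t <;> by_cases h' : j ∈ T t <;> simp_all
  have hsurj : Function.Surjective Φ := by
    intro y
    refine ⟨fun l => (y 0 - y 1 - y 2) * (if l = r then (1:ℝ) else 0)
      + y 1 * (if l = p then 1 else 0) + y 2 * (if l = q then 1 else 0), ?_⟩
    funext t
    rw [hΦapp]
    fin_cases t <;>
      simp [hT, Finset.sum_add_distrib, mul_ite, mul_one, mul_zero, Finset.sum_ite_eq',
        hpq, hqr, hpr, Ne.symm hpq, Ne.symm hqr, Ne.symm hpr] <;> ring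
  have hpq' : p ≠ q := fun h => hpq (by rw [h])
  have hpr' : p ≠ r := fun h => hpr (by rw [h])
  have hqr' : q ≠ r := fun h => hqr (by rw [h])
  have h3 : 3 ≤ n + 1 := by
    have hcard := Finset.card_le_univ ({p, q, r} : Finset (Fin (n+1)))
    rw [Finset.card_insert_of_notMem (by simp [hpq', hpr']),
      Finset.card_insert_of_notMem (by simp [hqr']), Finset.card_singleton] at hcard
    simpa using hcard
  have hrank : Module.finrank ℝ (LinearMap.ker Φ) = n - 2 := by
    have h1 := LinearMap.finrank_range_add_finrank_ker Φ
    rw [LinearMap.range_eq_top.mpr hsurj] at h1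
    rw [finrank_top] at h1
    simp [Module.finrank_pi] at h1
    omega
  have hle : Submodule.span ℝ (Set.range g) ≤ LinearMap.ker Φ :=
    Submodule.span_le.mpr (by rintro _ ⟨m, rfl⟩; exact hker m)
  have hmono := Submodule.finrank_mono hle
  rw [finrank_span_eq_card hli, hrank, Fintype.card_fin] at hmono
  omega

lemma perm_of_card {N j : ℕ} (S : Finset (Fin N)) (hS : S.card = j) :
    ∃ σ : Equiv.Perm (Fin N), ∀ i, ((σ⁻¹ i : Fin N) : ℕ) < j ↔ i ∈ S := by
  classical
  have hjN : j ≤ N := by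
    rw [← hS]; simpa using Finset.card_le_univ S
  have hC : Sᶜ.card = N - j := by rw [Finset.card_compl, hS]; simp
  have hsum : j + (N - j) = N := by omega
  let eS : Fin j ≃ {x // x ∈ S} := (finCongr hS.symm).trans S.equivFin.symm
  let eC : Fin (N - j) ≃ {x // ¬ x ∈ S} :=
    (finCongr hC.symm).trans (Sᶜ.equivFin.symm.trans
      (Equiv.subtypeEquivRight (fun x => Finset.mem_compl)))
  let σ : Equiv.Perm (Fin N) :=
    (finCongr hsum.symm).trans (finSumFinEquiv.symm.trans
      ((Equiv.sumCongr eS eC).trans (Equiv.sumCompl (· ∈ S))))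
  have key : ∀ k : Fin N, σ k ∈ S ↔ (k : ℕ) < j := by
    intro k
    rcases hsk : finSumFinEquiv.symm (finCongr hsum.symm k) with a | b
    · have hval : finCongr hsum.symm k = finSumFinEquiv (Sum.inl a) := by
        rw [← hsk, Equiv.apply_symm_apply]
      have hk : (k : ℕ) = (a : ℕ) := by
        have := congrArg Fin.val hval
        simpa [finSumFinEquiv_apply_left] using this
      have hσ : σ k = (eS a : Fin N) := by
        simp only [σ, Equiv.trans_apply, hsk, Equiv.sumCongr_apply, Sum.map_inl,
          Equiv.sumCompl_apply_inl]
      rw [hσ, hk]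
      simpa using ⟨fun _ => a.isLt, fun _ => (eS a).2⟩
    · have hval : finCongr hsum.symm k = finSumFinEquiv (Sum.inr b) := by
        rw [← hsk, Equiv.apply_symm_apply]
      have hk : (k : ℕ) = j + (b : ℕ) := by
        have := congrArg Fin.val hval
        simpa [finSumFinEquiv_apply_right] using this
      have hσ : σ k = (eC b : Fin N) := by
        simp only [σ, Equiv.trans_apply, hsk, Equiv.sumCongr_apply, Sum.map_inr,
          Equiv.sumCompl_apply_inr]
      rw [hσ, hk]
      have hnot : ((eC b : Fin N)) ∉ S := (eC b).2
      simp only [hnot, false_iff]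
      omega
  refine ⟨σ, fun i => ?_⟩
  have := key (σ⁻¹ i)
  rw [Equiv.Perm.coe_inv, Equiv.apply_symm_apply] at this
  exact this.symm

lemma exists_roots (n : ℕ) (hn : 1 ≤ n) (v : Fin (n+1) → ℝ)
    (σ : Equiv.Perm (Fin (n+1))) (j : ℕ) (hj1 : 1 ≤ j) (hjn : j ≤ n)
    (hval : ∀ k k' : Fin (n+1), ((k:ℕ) < j ↔ (k':ℕ) < j) → v (σ k) = v (σ k')) :
    ∃ g : Fin (n - 1) → (Fin (n + 1) → ℝ),
        LinearIndependent ℝ g ∧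
        (∀ m : Fin (n - 1), ∃ i j : Fin (n + 1), i < j ∧
          g m = fun l => (if l = i then (1 : ℝ) else 0) - (if l = j then 1 else 0)) ∧
        (∀ m : Fin (n - 1), (∑ l, v l * g m l) = 0) := by
  classical
  set k : Fin (n-1) → ℕ := fun m => if (m:ℕ)+1 < j then (m:ℕ) else (m:ℕ)+1 with hk
  have hkb : ∀ m : Fin (n-1), k m + 1 ≤ n := by
    intro m; have := m.isLt; dsimp [k]; split <;> omega
  have hkmono : ∀ m m' : Fin (n-1), m < m' → k m + 1 ≤ k m' := by
    intro m m' h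
    have h1 := m.isLt; have h2 := m'.isLt
    have h3 : (m:ℕ) < (m':ℕ) := h
    dsimp [k]; split <;> split <;> omega
  set K : Fin (n-1) → Fin (n+1) := fun m => ⟨k m, by have := hkb m; omega⟩ with hK
  set K' : Fin (n-1) → Fin (n+1) := fun m => ⟨k m + 1, by have := hkb m; omega⟩ with hK'
  set p : Fin (n-1) → Fin (n+1) := fun m => σ (K m) with hp
  set q : Fin (n-1) → Fin (n+1) := fun m => σ (K' m) with hq
  have hpq : ∀ m, p m ≠ q m := by
    intro m h
    have : K m = K' m := σ.injective h
    have := congrArg Fin.val this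
    simp [K, K'] at this
  set g : Fin (n - 1) → (Fin (n + 1) → ℝ) := fun m =>
    fun l => (if l = min (p m) (q m) then (1 : ℝ) else 0)
      - (if l = max (p m) (q m) then 1 else 0) with hg
  have hsumind : ∀ (w : Fin (n+1) → ℝ) (i jj : Fin (n+1)),
      (∑ l, w l * ((if l = i then (1:ℝ) else 0) - (if l = jj then 1 else 0))) = w i - w jj := by
    intro w i jj
    simp [mul_sub, Finset.sum_sub_distrib, mul_ite, mul_one, mul_zero]
  have hvpq : ∀ m, v (p m) = v (q m) := by
    intro m
    apply hval
    show ((K m : ℕ) < j ↔ ((K' m : ℕ)) < j)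
    simp only [K, K']
    dsimp [k]; split <;> omega
  refine ⟨g, ?_, ?_, ?_⟩
  · -- linear independence
    rw [Fintype.linearIndependent_iff]
    intro cc hsum0 m
    set filt : Finset (Fin (n+1)) := univ.filter (fun l => ((σ⁻¹ l : Fin (n+1)) : ℕ) ≤ k m) with hfiltdef
    have hfilt : ∀ x : Fin (n+1), σ x ∈ filt ↔ (x:ℕ) ≤ k m := by
      intro x; simp [filt, Equiv.Perm.coe_inv, Equiv.symm_apply_apply]
    have hinner : ∀ m', (∑ l ∈ filt, g m' l) =
        (if m' = m then (if p m' ≤ q m' then (1:ℝ) else -1) else 0) := by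
      intro m'
      have hsub : (∑ l ∈ filt, g m' l) =
          (if min (p m') (q m') ∈ filt then (1:ℝ) else 0)
            - (if max (p m') (q m') ∈ filt then 1 else 0) := by
        simp [g, Finset.sum_sub_distrib, Finset.sum_ite_eq']
      have hmemp : p m' ∈ filt ↔ k m' ≤ k m := by
        have := hfilt (K m'); simpa [p, K] using this
      have hmemq : q m' ∈ filt ↔ k m' + 1 ≤ k m := by
        have := hfilt (K' m'); simpa [q, K'] using this
      rcases eq_or_ne m' m with rfl | hne
      · have h1 : p m' ∈ filt := hmemp.mpr le_rfl
        have h2 : q m' ∉ filt := by rw [hmemq]; omega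
        rcases le_total (p m') (q m') with h | h
        · rw [hsub, min_eq_left h, max_eq_right h]
          simp [h1, h2, le_of_lt (lt_of_le_of_ne h (hpq m'))]
        · rw [hsub, min_eq_right h, max_eq_left h]
          have : ¬ (p m' ≤ q m') := by
            rcases lt_or_eq_of_le h with h' | h'
            · exact not_le.mpr h'
            · exact absurd h'.symm (hpq m')
          simp [h1, h2, this]
      · have hkk : k m' ≤ k m ↔ k m' + 1 ≤ k m := by
          rcases lt_or_gt_of_ne (fun h : (m' : Fin (n-1)) = m => hne h) with h | h
          · have := hkmono m' m h; omega
          · have := hkmono m m' h; omega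
        have hbothI : p m' ∈ filt ↔ q m' ∈ filt := by rw [hmemp, hmemq, hkk]
        rw [hsub]
        by_cases hin : p m' ∈ filt
        · have h2 : q m' ∈ filt := hbothI.mp hin
          rcases le_total (p m') (q m') with h | h
          · rw [min_eq_left h, max_eq_right h]; simp [hin, h2, hne]
          · rw [min_eq_right h, max_eq_left h]; simp [hin, h2, hne]
        · have h2 : q m' ∉ filt := fun h' => hin (hbothI.mpr h')
          rcases le_total (p m') (q m') with h | h
          · rw [min_eq_left h, max_eq_right h]; simp [hin, h2, hne]
          · rw [min_eq_right h, max_eq_left h]; simp [hin, h2, hne]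
    have h0 : (∑ m', cc m' * (∑ l ∈ filt, g m' l)) = 0 := by
      have hfun : ∀ l, (∑ m', cc m' * g m' l) = 0 := by
        intro l
        have := congrFun hsum0 l
        simpa [Finset.sum_apply, Pi.smul_apply, smul_eq_mul] using this
      calc ∑ m', cc m' * ∑ l ∈ filt, g m' l
          = ∑ m', ∑ l ∈ filt, cc m' * g m' l := by simp [Finset.mul_sum]
        _ = ∑ l ∈ filt, ∑ m', cc m' * g m' l := Finset.sum_comm
        _ = 0 := by simp [hfun]
    rw [Finset.sum_eq_single m
      (fun b _ hb => by rw [hinner b]; simp [hb])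
      (by intro h; exact absurd (Finset.mem_univ m) h)] at h0
    rw [hinner m] at h0
    by_cases hle : p m ≤ q m
    · simpa [hle] using h0
    · simpa [hle] using h0
  · intro m
    exact ⟨min (p m) (q m), max (p m) (q m), min_lt_max.mpr (hpq m), rfl⟩
  · intro m
    rw [hg]
    rw [hsumind]
    rcases le_total (p m) (q m) with h | h
    · rw [min_eq_left h, max_eq_right h, hvpq m, sub_self]
    · rw [min_eq_right h, max_eq_left h, hvpq m, sub_self]

/-- In the hyperplane `V = {x : Σ xᵢ = 0}` of `ℝ^{n+1}`, a nonzero sum-zero vector `v` is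
orthogonal to some set of `n-1` linearly independent positive roots `e_i - e_j` (`i < j`)
of `A_n` if and only if `v` is a nonzero scalar multiple of a conjugate `σ·ω_j` of a
fundamental weight `ω_j = e₁ + ⋯ + e_j - (j/(n+1))(e₁ + ⋯ + e_{n+1})`. -/
theorem chamber_wall_normals_are_conjugate_fundamental_weights
    (n : ℕ) (hn : 1 ≤ n) (v : Fin (n + 1) → ℝ)
    (hv0 : (∑ i, v i) = 0) (hvne : v ≠ 0) :
    (∃ g : Fin (n - 1) → (Fin (n + 1) → ℝ),
        LinearIndependent ℝ g ∧
        (∀ m : Fin (n - 1), ∃ i j : Fin (n + 1), i < j ∧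
          g m = fun l => (if l = i then (1 : ℝ) else 0) - (if l = j then 1 else 0)) ∧
        (∀ m : Fin (n - 1), (∑ l, v l * g m l) = 0))
      ↔ (∃ (c : ℝ) (σ : Equiv.Perm (Fin (n + 1))) (j : ℕ), c ≠ 0 ∧ 1 ≤ j ∧ j ≤ n ∧
          v = fun i =>
            c * ((if ((σ⁻¹ i : Fin (n + 1)) : ℕ) < j then (1 : ℝ) else 0)
                  - (j : ℝ) / (n + 1))) := by
  classical
  constructor
  · rintro ⟨g, hli, hroot, horth⟩
    have hex : ∃ p, v p ≠ 0 := by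
      by_contra h; push_neg at h; exact hvne (funext fun l => h l)
    obtain ⟨p, hp0⟩ := hex
    have hexq : ∃ q, v q ≠ v p := by
      by_contra h; push_neg at h
      apply hp0
      have hsum : (∑ i, v i) = (((n+1:ℕ)):ℝ) * v p := by
        rw [Finset.sum_congr rfl (fun i _ => h i), Finset.sum_const, nsmul_eq_mul,
          Finset.card_univ, Fintype.card_fin]
      rw [hsum] at hv0
      have hne : (((n+1:ℕ)):ℝ) ≠ 0 := Nat.cast_ne_zero.mpr (by omega)
      exact (mul_eq_zero.mp hv0).resolve_left hne
    obtain ⟨q, hqp⟩ := hexq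
    set a := v p with ha
    set b := v q with hb
    have hTwo : ∀ l, v l = a ∨ v l = b := by
      intro l
      rcases aux_two_values n v g hli hroot horth p q l with h | h | h
      · exact absurd h.symm hqp
      · exact Or.inl h.symm
      · exact Or.inr h.symm
    set S : Finset (Fin (n+1)) := Finset.univ.filter (fun l => v l = b) with hS
    set j := S.card with hj
    have hqS : q ∈ S := by simp [hS, hb]
    have hpS : p ∉ S := by
      simp only [hS, Finset.mem_filter, Finset.mem_univ, true_and]
      exact fun h => hqp h.symm
    have hj1 : 1 ≤ j := Finset.card_pos.mpr ⟨q, hqS⟩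
    have hjn : j ≤ n := by
      have hne : S ≠ Finset.univ := fun h => hpS (h ▸ Finset.mem_univ p)
      have hlt := Finset.card_lt_card (Finset.ssubset_univ_iff.mpr hne)
      rw [Finset.card_univ, Fintype.card_fin] at hlt
      omega
    have hcards : (Finset.univ.filter (fun l => ¬ v l = b)).card = n + 1 - j := by
      have h := Finset.card_filter_add_card_filter_not
        (s := (Finset.univ : Finset (Fin (n+1)))) (p := fun l => v l = b)
      rw [Finset.card_univ, Fintype.card_fin, ← hS] at h
      omega
    have hkey : (j:ℝ) * b + ((n:ℝ) + 1 - (j:ℝ)) * a = 0 := by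
      have hsplit := Finset.sum_filter_add_sum_filter_not Finset.univ (fun l => v l = b) v
      have h1 : (∑ l ∈ Finset.univ.filter (fun l => v l = b), v l) = (j:ℝ) * b := by
        rw [Finset.sum_congr rfl (fun l hl => (Finset.mem_filter.mp hl).2)]
        rw [Finset.sum_const, nsmul_eq_mul]
      have h2 : (∑ l ∈ Finset.univ.filter (fun l => ¬ v l = b), v l) = ((n:ℝ)+1-(j:ℝ)) * a := by
        rw [Finset.sum_congr rfl (fun l hl => ((hTwo l).resolve_right (Finset.mem_filter.mp hl).2))]
        rw [Finset.sum_const, hcards, nsmul_eq_mul]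
        have hcast : ((n + 1 - j : ℕ) : ℝ) = (n:ℝ) + 1 - j := by
          have hle : j ≤ n + 1 := by omega
          push_cast [Nat.cast_sub hle]; ring
        rw [hcast]
      rw [h1, h2] at hsplit
      rw [hv0] at hsplit
      linarith
    obtain ⟨σ, hσ⟩ := perm_of_card S rfl
    refine ⟨b - a, σ, j, sub_ne_zero.mpr (fun h => hqp h), hj1, hjn, funext fun i => ?_⟩
    have hiS : (((σ⁻¹ i : Fin (n+1)) : ℕ) < j) ↔ v i = b := by
      rw [hσ]; simp [hS]
    have hn1 : (n:ℝ) + 1 ≠ 0 := by positivity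
    by_cases hib : v i = b
    · rw [if_pos (hiS.mpr hib), hib]
      field_simp
      linear_combination hkey
    · have hia : v i = a := (hTwo i).resolve_right hib
      rw [if_neg (fun h => hib (hiS.mp h)), hia]
      field_simp
      linear_combination hkey
  · rintro ⟨c, σ, j, hc, hj1, hjn, hv⟩
    apply exists_roots n hn v σ j hj1 hjn
    intro k k' hiff
    rw [hv]
    simp only [Equiv.Perm.coe_inv, Equiv.symm_apply_apply]
    rw [if_congr hiff rfl rfl]
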